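/- arXiv:2008.13232 — 2 statements merged into one kernel-verified Lean document; each statement's English description precedes it below -/
import Mathlib

section
/- Let α = (α₁,…,α_s) be a composition with s even. Then the rank generating function satisfies r(q;α) = r(q; α₁,…,α_{s−2}, α_{s−1} − 1) + q · r(q; α₁,…,α_{s−1}, α_s − 1), where by convention F(α₁,…,α_{s−1},0) = F(α₁,…,α_{s−1}). -/
open Polynomial

/-- The order relation of the fence poset `F(α)` on positions `0,…,α.sum`
(position `p` corresponds to the element `x_{p+1}`).  Segment `j` (0-indexed)
occupies positions `(α.take j).sum` through `(α.take (j+1)).sum`; even-indexed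
segments are ascending and odd-indexed segments are descending. -/
def fenceLe (α : List ℕ) (p q : ℕ) : Prop :=
  p = q ∨ ∃ j < α.length,
    if j % 2 = 0 then
      (α.take j).sum ≤ p ∧ p ≤ q ∧ q ≤ (α.take (j + 1)).sum
    else
      (α.take j).sum ≤ q ∧ q ≤ p ∧ p ≤ (α.take (j + 1)).sum

/-- `I` is a lower order ideal of the fence `F(α)`. -/
def IsFenceIdeal (α : List ℕ) (I : Finset (Fin (α.sum + 1))) : Prop :=
  ∀ p q : Fin (α.sum + 1), fenceLe α p q → q ∈ I → p ∈ I

/-- The number of lower order ideals of `F(α)` of cardinality `k`,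
i.e. the size of the `k`-th rank of the distributive lattice `L(α)`. -/
noncomputable def fenceRk (α : List ℕ) (k : ℕ) : ℕ :=
  Nat.card {I : Finset (Fin (α.sum + 1)) // IsFenceIdeal α I ∧ I.card = k}

/-- The rank generating function `r(q;α)` of `L(α)`. -/
noncomputable def rpoly (α : List ℕ) : Polynomial ℕ :=
  ∑ k ∈ Finset.range (α.sum + 2), Polynomial.C (fenceRk α k) * Polynomial.X ^ k

/-- Deletion of a trailing `0` part: the convention `F(α₁,…,α_{s-1},0) = F(α₁,…,α_{s-1})`. -/
def normComp (l : List ℕ) : List ℕ :=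
  if l.getLast? = some 0 then l.dropLast else l

-- infrastructure
lemma take_sum_append (γ L : List ℕ) (j : ℕ) :
    ((γ ++ L).take j).sum = (γ.take j).sum + (L.take (j - γ.length)).sum := by
  rw [List.take_append, List.sum_append]

lemma take_sum_le (l : List ℕ) (j : ℕ) : (l.take j).sum ≤ l.sum := by
  conv_rhs => rw [← List.take_append_drop j l]
  rw [List.sum_append]; exact Nat.le_add_right _ _

lemma take_sum_full (l : List ℕ) (j : ℕ) (h : l.length ≤ j) : (l.take j).sum = l.sum := by
  rw [List.take_of_length_le h]

noncomputable def idealSet (l : List ℕ) : Finset (Finset (Fin (l.sum + 1))) :=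
  @Finset.filter _ (fun I => IsFenceIdeal l I) (Classical.decPred _) Finset.univ

lemma mem_idealSet {l : List ℕ} {I : Finset (Fin (l.sum + 1))} :
    I ∈ idealSet l ↔ IsFenceIdeal l I := by
  simp [idealSet]

lemma fenceRk_eq_card (l : List ℕ) (k : ℕ) :
    fenceRk l k = (@Finset.filter _ (fun I => I.card = k) (Classical.decPred _) (idealSet l)).card := by
  classical
  rw [fenceRk, Nat.card_eq_fintype_card]
  rw [Fintype.card_subtype]
  congr 1
  ext I
  simp [idealSet, and_comm]

lemma rpoly_eq_sum (l : List ℕ) : rpoly l = ∑ I ∈ idealSet l, X ^ I.card := by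
  classical
  rw [rpoly]
  rw [← Finset.sum_fiberwise_of_maps_to (g := fun I : Finset (Fin (l.sum+1)) => I.card) (t := Finset.range (l.sum+2))
    (fun I _ => Finset.mem_range.mpr (by
      have h := Finset.card_le_univ I
      simp [Finset.card_univ] at h
      show I.card < l.sum + 2
      omega))]
  refine Finset.sum_congr rfl fun k _ => ?_
  rw [fenceRk_eq_card]
  rw [Finset.sum_congr rfl (fun I hI => by
    rw [(Finset.mem_filter.mp hI).2])]
  rw [Finset.sum_const, nsmul_eq_mul]
  rw [show ((Finset.filter (fun i => i.card = k) (idealSet l)) : Finset _)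
      = @Finset.filter _ (fun I => I.card = k) (Classical.decPred _) (idealSet l) by congr]
  simp

lemma rpoly_congr {l₁ l₂ : List ℕ} (hs : l₁.sum = l₂.sum)
    (hle : ∀ p q, fenceLe l₁ p q ↔ fenceLe l₂ p q) : rpoly l₁ = rpoly l₂ := by
  have hR : fenceLe l₁ = fenceLe l₂ := by
    funext p q; exact propext (hle p q)
  unfold rpoly fenceRk IsFenceIdeal
  rw [hR, hs]

lemma fenceLe_append_zero (m : List ℕ) (p q : ℕ) :
    fenceLe (m ++ [0]) p q ↔ fenceLe m p q := by
  constructor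
  · rintro (rfl | ⟨j, hj, hc⟩)
    · exact Or.inl rfl
    simp only [List.length_append, List.length_singleton] at hj
    rcases Nat.lt_or_ge j m.length with hjm | hjm
    · refine Or.inr ⟨j, hjm, ?_⟩
      rwa [take_sum_append, take_sum_append, Nat.sub_eq_zero_of_le (le_of_lt hjm),
        Nat.sub_eq_zero_of_le hjm, List.take_zero, List.sum_nil, Nat.add_zero, Nat.add_zero] at hc
    · have hje : j = m.length := by omega
      subst hje
      rw [take_sum_append, take_sum_append, take_sum_full m _ (by omega),
        take_sum_full m _ (by omega)] at hc
      have h1 : ([0].take (m.length - m.length)).sum ≤ 0 := by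
        have := take_sum_le [0] (m.length - m.length); simpa using this
      have h2 : ([0].take (m.length + 1 - m.length)).sum ≤ 0 := by
        have := take_sum_le [0] (m.length + 1 - m.length); simpa using this
      have : p = q := by
        by_cases h : m.length % 2 = 0
        · rw [if_pos h] at hc; omega
        · rw [if_neg h] at hc; omega
      exact Or.inl this
  · rintro (rfl | ⟨j, hj, hc⟩)
    · exact Or.inl rfl
    refine Or.inr ⟨j, by simp; omega, ?_⟩
    rwa [take_sum_append, take_sum_append, Nat.sub_eq_zero_of_le (le_of_lt hj),
      Nat.sub_eq_zero_of_le hj, List.take_zero, List.sum_nil, Nat.add_zero, Nat.add_zero]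

lemma rpoly_normComp (l : List ℕ) : rpoly (normComp l) = rpoly l := by
  rw [normComp]
  split_ifs with h
  · have hl : l = l.dropLast ++ [0] := by
      conv_lhs => rw [← List.dropLast_append_getLast? 0 h]
    rw [show rpoly l = rpoly (l.dropLast ++ [0]) by rw [← hl]]
    refine (rpoly_congr ?_ ?_).symm
    · simp
    · exact fenceLe_append_zero l.dropLast
  · rfl

lemma take_sum_append_le (γ L : List ℕ) {i : ℕ} (hi : i ≤ γ.length) :
    ((γ ++ L).take i).sum = (γ.take i).sum := by
  rw [take_sum_append, Nat.sub_eq_zero_of_le hi]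
  simp

lemma take_sum_append_ge (γ L : List ℕ) {i : ℕ} (hi : γ.length ≤ i) :
    ((γ ++ L).take i).sum = γ.sum + (L.take (i - γ.length)).sum := by
  rw [take_sum_append, take_sum_full γ _ hi]

/-- restriction of the big fence to positions `< γ.sum + b` agrees with `γ ++ [b-1]` -/
lemma fenceLe_iff_A (γ : List ℕ) (b a : ℕ) (hb : 0 < b) (hn : γ.length % 2 = 0)
    (p q : ℕ) (hq : q < γ.sum + b) :
    fenceLe (γ ++ [b, a]) p q ↔ fenceLe (γ ++ [b - 1]) p q := by
  have eb1 : ((γ ++ [b, a]).take (γ.length + 1)).sum = γ.sum + b := by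
    rw [take_sum_append_ge _ _ (by omega)]
    norm_num
  have eb2 : ((γ ++ [b, a]).take (γ.length + 2)).sum = γ.sum + b + a := by
    rw [take_sum_append_ge _ _ (by omega)]
    have : γ.length + 2 - γ.length = 2 := by omega
    rw [this]
    simp [List.take]
    omega
  have ec1 : ((γ ++ [b - 1]).take (γ.length + 1)).sum = γ.sum + (b - 1) := by
    rw [take_sum_append_ge _ _ (by omega)]
    norm_num
  have ebn : ((γ ++ [b, a]).take γ.length).sum = γ.sum := by
    rw [take_sum_append_le _ _ (le_refl _), take_sum_full _ _ (le_refl _)]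
  have ecn : ((γ ++ [b - 1]).take γ.length).sum = γ.sum := by
    rw [take_sum_append_le _ _ (le_refl _), take_sum_full _ _ (le_refl _)]
  unfold fenceLe
  simp only [List.length_append, List.length_cons, List.length_nil]
  constructor
  · rintro (rfl | ⟨j, hj, hc⟩)
    · exact Or.inl rfl
    rcases Nat.lt_trichotomy j γ.length with h | h | h
    · refine Or.inr ⟨j, by omega, ?_⟩
      rw [take_sum_append_le _ _ (by omega : j ≤ γ.length),
          take_sum_append_le _ _ (by omega : j + 1 ≤ γ.length)] at hc ⊢
      exact hc
    · subst h
      rw [if_pos hn] at hc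
      rw [ebn, eb1] at hc
      refine Or.inr ⟨γ.length, by omega, ?_⟩
      rw [if_pos hn, ecn, ec1]
      refine ⟨hc.1, hc.2.1, by omega⟩
    · have hj1 : j = γ.length + 1 := by omega
      subst hj1
      rw [if_neg (by omega)] at hc
      rw [eb1] at hc
      exact absurd hc.1 (by omega)
  · rintro (rfl | ⟨j, hj, hc⟩)
    · exact Or.inl rfl
    rcases Nat.lt_or_ge j γ.length with h | h
    · refine Or.inr ⟨j, by omega, ?_⟩
      rw [take_sum_append_le _ _ (by omega : j ≤ γ.length),
          take_sum_append_le _ _ (by omega : j + 1 ≤ γ.length)] at hc ⊢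
      exact hc
    · have hje : j = γ.length := by omega
      subst hje
      rw [if_pos hn, ecn, ec1] at hc
      refine Or.inr ⟨γ.length, by omega, ?_⟩
      rw [if_pos hn, ebn, eb1]
      refine ⟨hc.1, hc.2.1, by omega⟩

/-- restriction of the big fence to positions `< γ.sum + b + a` agrees with `γ ++ [b, a-1]` -/
lemma fenceLe_iff_B (γ : List ℕ) (b a : ℕ) (ha : 0 < a) (hn : γ.length % 2 = 0)
    (p q : ℕ) (hp : p < γ.sum + b + a) :
    fenceLe (γ ++ [b, a]) p q ↔ fenceLe (γ ++ [b, a - 1]) p q := by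
  have eb1 : ((γ ++ [b, a]).take (γ.length + 1)).sum = γ.sum + b := by
    rw [take_sum_append_ge _ _ (by omega)]; norm_num
  have eb2 : ((γ ++ [b, a]).take (γ.length + 2)).sum = γ.sum + b + a := by
    rw [take_sum_append_ge _ _ (by omega)]
    have : γ.length + 2 - γ.length = 2 := by omega
    rw [this]; simp [List.take]; omega
  have ed1 : ((γ ++ [b, a - 1]).take (γ.length + 1)).sum = γ.sum + b := by
    rw [take_sum_append_ge _ _ (by omega)]; norm_num
  have ed2 : ((γ ++ [b, a - 1]).take (γ.length + 2)).sum = γ.sum + b + (a - 1) := by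
    rw [take_sum_append_ge _ _ (by omega)]
    have : γ.length + 2 - γ.length = 2 := by omega
    rw [this]; simp [List.take]; omega
  unfold fenceLe
  simp only [List.length_append, List.length_cons, List.length_nil]
  constructor
  · rintro (rfl | ⟨j, hj, hc⟩)
    · exact Or.inl rfl
    rcases Nat.lt_trichotomy j γ.length with h | h | h
    · refine Or.inr ⟨j, by omega, ?_⟩
      rw [take_sum_append_le _ _ (by omega : j ≤ γ.length),
          take_sum_append_le _ _ (by omega : j + 1 ≤ γ.length)] at hc ⊢
      exact hc
    · subst h
      refine Or.inr ⟨γ.length, by omega, ?_⟩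
      rw [if_pos hn] at hc ⊢
      rw [take_sum_append_le _ _ (le_refl _), eb1] at hc
      rw [take_sum_append_le _ _ (le_refl _), ed1]
      exact hc
    · have hj1 : j = γ.length + 1 := by omega
      subst hj1
      refine Or.inr ⟨γ.length + 1, by omega, ?_⟩
      rw [if_neg (by omega)] at hc ⊢
      rw [eb1, eb2] at hc
      rw [ed1, ed2]
      refine ⟨hc.1, hc.2.1, by omega⟩
  · rintro (rfl | ⟨j, hj, hc⟩)
    · exact Or.inl rfl
    rcases Nat.lt_trichotomy j γ.length with h | h | h
    · refine Or.inr ⟨j, by omega, ?_⟩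
      rw [take_sum_append_le _ _ (by omega : j ≤ γ.length),
          take_sum_append_le _ _ (by omega : j + 1 ≤ γ.length)] at hc ⊢
      exact hc
    · subst h
      refine Or.inr ⟨γ.length, by omega, ?_⟩
      rw [if_pos hn] at hc ⊢
      rw [take_sum_append_le _ _ (le_refl _), ed1] at hc
      rw [take_sum_append_le _ _ (le_refl _), eb1]
      exact hc
    · have hj1 : j = γ.length + 1 := by omega
      subst hj1
      refine Or.inr ⟨γ.length + 1, by omega, ?_⟩
      rw [if_neg (by omega)] at hc ⊢
      rw [ed1, ed2] at hc
      rw [eb1, eb2]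
      refine ⟨hc.1, hc.2.1, by omega⟩

/-- ideals are downward closed past `γ.sum + b` -/
lemma fenceLe_lt_A (γ : List ℕ) (b a : ℕ) (hb : 0 < b) (hn : γ.length % 2 = 0)
    (p q : ℕ) (h : fenceLe (γ ++ [b, a]) p q) (hq : q < γ.sum + b) : p < γ.sum + b := by
  rcases h with rfl | ⟨j, hj, hc⟩
  · exact hq
  simp only [List.length_append, List.length_cons, List.length_nil] at hj
  by_cases hpar : j % 2 = 0
  · rw [if_pos hpar] at hc
    omega
  · rw [if_neg hpar] at hc
    rcases Nat.lt_trichotomy j γ.length with h | h | h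
    · have : ((γ ++ [b, a]).take (j + 1)).sum ≤ γ.sum := by
        rw [take_sum_append_le _ _ (by omega : j + 1 ≤ γ.length)]
        exact take_sum_le _ _
      omega
    · omega
    · have hj1 : j = γ.length + 1 := by omega
      subst hj1
      have eb1 : ((γ ++ [b, a]).take (γ.length + 1)).sum = γ.sum + b := by
        rw [take_sum_append_ge _ _ (by omega)]; norm_num
      omega

/-- the only element below the last position is itself -/
lemma fenceLe_last (γ : List ℕ) (b a : ℕ) (ha : 0 < a) (hn : γ.length % 2 = 0)
    (p : ℕ) (h : fenceLe (γ ++ [b, a]) p (γ.sum + b + a)) : p = γ.sum + b + a := by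
  rcases h with h | ⟨j, hj, hc⟩
  · exact h
  simp only [List.length_append, List.length_cons, List.length_nil] at hj
  by_cases hpar : j % 2 = 0
  · rw [if_pos hpar] at hc
    exfalso
    have hle : ((γ ++ [b, a]).take (j + 1)).sum ≤ γ.sum + b := by
      rcases Nat.lt_or_ge (j + 1) (γ.length + 1) with h | h
      · rw [take_sum_append_le _ _ (by omega : j + 1 ≤ γ.length)]
        have := take_sum_le γ (j + 1); omega
      · have hj1 : j = γ.length := by omega
        subst hj1
        rw [take_sum_append_ge _ _ (by omega)]
        norm_num
    omega
  · rw [if_neg hpar] at hc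
    have hle : ((γ ++ [b, a]).take (j + 1)).sum ≤ γ.sum + b + a := by
      have h1 := take_sum_le (γ ++ [b, a]) (j + 1)
      have h2 : (γ ++ [b, a]).sum = γ.sum + b + a := by simp; omega
      omega
    omega

/-- everything in the last descending segment is above the last position -/
lemma fenceLe_last_of_ge (γ : List ℕ) (b a : ℕ) (hn : γ.length % 2 = 0)
    (q : ℕ) (h1 : γ.sum + b ≤ q) (h2 : q ≤ γ.sum + b + a) :
    fenceLe (γ ++ [b, a]) (γ.sum + b + a) q := by
  refine Or.inr ⟨γ.length + 1, by simp, ?_⟩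
  rw [if_neg (by omega)]
  have eb1 : ((γ ++ [b, a]).take (γ.length + 1)).sum = γ.sum + b := by
    rw [take_sum_append_ge _ _ (by omega)]; norm_num
  have eb2 : ((γ ++ [b, a]).take (γ.length + 1 + 1)).sum = γ.sum + b + a := by
    rw [take_sum_append_ge _ _ (by omega)]
    have : γ.length + 1 + 1 - γ.length = 2 := by omega
    rw [this]; simp [List.take]; omega
  omega

def fup {m n : ℕ} (h : m ≤ n) (J : Finset (Fin m)) : Finset (Fin n) :=
  J.map (Fin.castLEEmb h)

def fdown {m n : ℕ} (h : m ≤ n) (I : Finset (Fin n)) : Finset (Fin m) :=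
  Finset.univ.filter (fun x : Fin m => Fin.castLE h x ∈ I)

lemma mem_fup {m n : ℕ} {h : m ≤ n} {J : Finset (Fin m)} {x : Fin n} :
    x ∈ fup h J ↔ ∃ hx : x.val < m, (⟨x.val, hx⟩ : Fin m) ∈ J := by
  constructor
  · rintro hx
    rw [fup, Finset.mem_map] at hx
    obtain ⟨y, hy, rfl⟩ := hx
    exact ⟨y.isLt, by simpa [Fin.castLEEmb, Fin.castLE] using hy⟩
  · rintro ⟨hx, hmem⟩
    rw [fup, Finset.mem_map]
    exact ⟨⟨x.val, hx⟩, hmem, by simp [Fin.castLEEmb, Fin.castLE]⟩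

lemma mem_fdown {m n : ℕ} {h : m ≤ n} {I : Finset (Fin n)} {x : Fin m} :
    x ∈ fdown h I ↔ Fin.castLE h x ∈ I := by
  simp [fdown]

lemma fdown_fup {m n : ℕ} (h : m ≤ n) (J : Finset (Fin m)) : fdown h (fup h J) = J := by
  ext x
  rw [mem_fdown, mem_fup]
  constructor
  · rintro ⟨hx, hmem⟩
    have e : (⟨(Fin.castLE h x).val, hx⟩ : Fin m) = x := Fin.ext rfl
    rwa [e] at hmem
  · intro hx
    refine ⟨x.isLt, ?_⟩
    have e : (⟨(Fin.castLE h x).val, x.isLt⟩ : Fin m) = x := Fin.ext rfl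
    rwa [e]

lemma fup_fdown {m n : ℕ} (h : m ≤ n) (I : Finset (Fin n)) (hI : ∀ x ∈ I, x.val < m) :
    fup h (fdown h I) = I := by
  ext x
  rw [mem_fup]
  constructor
  · rintro ⟨hx, hmem⟩
    rw [mem_fdown] at hmem
    have e : Fin.castLE h ⟨x.val, hx⟩ = x := Fin.ext rfl
    rwa [e] at hmem
  · intro hx
    refine ⟨hI x hx, ?_⟩
    rw [mem_fdown]
    have e : Fin.castLE h ⟨x.val, hI x hx⟩ = x := Fin.ext rfl
    rwa [e]

lemma card_fup {m n : ℕ} (h : m ≤ n) (J : Finset (Fin m)) : (fup h J).card = J.card :=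
  Finset.card_map _

lemma sum_part1 (γ : List ℕ) (b a : ℕ) (hb : 0 < b) (ha : 0 < a) (hn : γ.length % 2 = 0) :
    ∑ I ∈ (idealSet (γ ++ [b, a])).filter
        (fun I => Fin.last ((γ ++ [b, a]).sum) ∉ I), (X : ℕ[X]) ^ I.card
      = ∑ J ∈ idealSet (γ ++ [b - 1]), (X : ℕ[X]) ^ J.card := by
  have sα : (γ ++ [b, a]).sum = γ.sum + b + a := by simp; omega
  have sβ : (γ ++ [b - 1]).sum = γ.sum + (b - 1) := by simp
  have hmn : (γ ++ [b - 1]).sum + 1 ≤ (γ ++ [b, a]).sum + 1 := by omega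
  have key : ∀ I ∈ (idealSet (γ ++ [b, a])).filter
      (fun I => Fin.last ((γ ++ [b, a]).sum) ∉ I),
      ∀ x ∈ I, x.val < (γ ++ [b - 1]).sum + 1 := by
    intro I hI x hx
    rw [Finset.mem_filter] at hI
    obtain ⟨hI1, hI2⟩ := hI
    rw [mem_idealSet] at hI1
    by_contra hcon
    push_neg at hcon
    have hx2 : x.val ≤ γ.sum + b + a := by have := x.isLt; omega
    have hge : γ.sum + b ≤ x.val := by omega
    have hle := fenceLe_last_of_ge γ b a hn x.val hge hx2
    have hfl : fenceLe (γ ++ [b, a]) (Fin.last ((γ ++ [b, a]).sum)).val x.val := by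
      rw [Fin.val_last]
      revert hle
      generalize x.val = v
      intro hle
      rw [sα]
      exact hle
    exact hI2 (hI1 _ x hfl hx)
  refine Finset.sum_nbij' (fun I => fdown hmn I) (fun J => fup hmn J) ?_ ?_ ?_ ?_ ?_
  · intro I hI
    rw [mem_idealSet]
    intro p q hpq hq
    rw [mem_fdown] at hq ⊢
    obtain ⟨hI1, -⟩ := Finset.mem_filter.mp hI
    rw [mem_idealSet] at hI1
    refine hI1 (Fin.castLE hmn p) (Fin.castLE hmn q) ?_ hq
    have hqlt : (q : ℕ) < γ.sum + b := by have := q.isLt; omega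
    exact (fenceLe_iff_A γ b a hb hn p q hqlt).mpr hpq
  · intro J hJ
    rw [mem_idealSet] at hJ
    rw [Finset.mem_filter]
    constructor
    · rw [mem_idealSet]
      intro p q hpq hq
      rw [mem_fup] at hq ⊢
      obtain ⟨hqlt, hqmem⟩ := hq
      have hq2 : (q : ℕ) < γ.sum + b := by omega
      have hplt : (p : ℕ) < γ.sum + b := fenceLe_lt_A γ b a hb hn p q hpq hq2
      have hplt' : (p : ℕ) < (γ ++ [b - 1]).sum + 1 := by omega
      refine ⟨hplt', ?_⟩
      exact hJ ⟨p, hplt'⟩ ⟨q, hqlt⟩ ((fenceLe_iff_A γ b a hb hn p q hq2).mp hpq) hqmem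
    · rw [mem_fup]
      rintro ⟨hlt, -⟩
      rw [Fin.val_last] at hlt
      omega
  · intro I hI
    exact fup_fdown hmn I (key I hI)
  · intro J _
    exact fdown_fup hmn J
  · intro I hI
    have hc : I.card = (fdown hmn I).card := by
      conv_lhs => rw [← fup_fdown hmn I (key I hI)]
      rw [card_fup]
    rw [hc]

lemma sum_part2 (γ : List ℕ) (b a : ℕ) (hb : 0 < b) (ha : 0 < a) (hn : γ.length % 2 = 0) :
    ∑ I ∈ (idealSet (γ ++ [b, a])).filter
        (fun I => Fin.last ((γ ++ [b, a]).sum) ∈ I), (X : ℕ[X]) ^ I.card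
      = ∑ K ∈ idealSet (γ ++ [b, a - 1]), (X : ℕ[X]) ^ (K.card + 1) := by
  have sα : (γ ++ [b, a]).sum = γ.sum + b + a := by simp; omega
  have sδ : (γ ++ [b, a - 1]).sum = γ.sum + b + (a - 1) := by simp; omega
  have hmn : (γ ++ [b, a - 1]).sum + 1 ≤ (γ ++ [b, a]).sum + 1 := by omega
  have hLval : (Fin.last ((γ ++ [b, a]).sum) : ℕ) = γ.sum + b + a := by
    rw [Fin.val_last]; exact sα
  have hLnot : ∀ K : Finset (Fin ((γ ++ [b, a - 1]).sum + 1)),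
      Fin.last ((γ ++ [b, a]).sum) ∉ fup hmn K := by
    intro K hcon
    rw [mem_fup] at hcon
    obtain ⟨hlt, -⟩ := hcon
    omega
  have eraseBound : ∀ I : Finset (Fin ((γ ++ [b, a]).sum + 1)),
      ∀ x ∈ I.erase (Fin.last ((γ ++ [b, a]).sum)), x.val < (γ ++ [b, a - 1]).sum + 1 := by
    intro I x hx
    obtain ⟨hne, -⟩ := Finset.mem_erase.mp hx
    have h1 : x.val ≤ γ.sum + b + a := by have := x.isLt; omega
    have h2 : x.val ≠ γ.sum + b + a := by
      intro hcon
      exact hne (Fin.ext (by rw [hLval]; exact hcon))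
    omega
  refine Finset.sum_nbij'
    (fun I => fdown hmn (I.erase (Fin.last ((γ ++ [b, a]).sum))))
    (fun K => insert (Fin.last ((γ ++ [b, a]).sum)) (fup hmn K)) ?_ ?_ ?_ ?_ ?_
  · intro I hI
    obtain ⟨hI1, hI2⟩ := Finset.mem_filter.mp hI
    rw [mem_idealSet] at hI1 ⊢
    intro p q hpq hq
    rw [mem_fdown] at hq ⊢
    obtain ⟨hqne, hqmem⟩ := Finset.mem_erase.mp hq
    have hplt : (p : ℕ) < γ.sum + b + a := by have := p.isLt; omega
    have hα : fenceLe (γ ++ [b, a]) p q := (fenceLe_iff_B γ b a ha hn p q hplt).mpr hpq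
    refine Finset.mem_erase.mpr ⟨?_, hI1 _ _ (by rw [Fin.coe_castLE, Fin.coe_castLE]; exact hα) hqmem⟩
    intro hcon
    have : (p : ℕ) = γ.sum + b + a := by
      have := congrArg Fin.val hcon
      rwa [hLval] at this
    omega
  · intro K hK
    rw [mem_idealSet] at hK
    rw [Finset.mem_filter]
    refine ⟨?_, Finset.mem_insert_self _ _⟩
    rw [mem_idealSet]
    intro p q hpq hq
    rw [Finset.mem_insert] at hq ⊢
    rcases hq with rfl | hq
    · left
      have hballs : fenceLe (γ ++ [b, a]) p (γ.sum + b + a) := by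
        have := hpq
        rwa [hLval] at this
      exact Fin.ext (by rw [hLval]; exact fenceLe_last γ b a ha hn p hballs)
    · rw [mem_fup] at hq
      obtain ⟨hqlt, hqmem⟩ := hq
      by_cases hp : (p : ℕ) = γ.sum + b + a
      · left
        exact Fin.ext (by rw [hLval]; exact hp)
      · right
        have hplt : (p : ℕ) < γ.sum + b + a := by have := p.isLt; omega
        have hplt' : (p : ℕ) < (γ ++ [b, a - 1]).sum + 1 := by omega
        rw [mem_fup]
        refine ⟨hplt', ?_⟩
        exact hK ⟨p, hplt'⟩ ⟨q, hqlt⟩ ((fenceLe_iff_B γ b a ha hn p q hplt).mp hpq) hqmem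
  · intro I hI
    obtain ⟨-, hI2⟩ := Finset.mem_filter.mp hI
    rw [fup_fdown hmn _ (eraseBound I), Finset.insert_erase hI2]
  · intro K _
    rw [Finset.erase_insert (hLnot K), fdown_fup]
  · intro I hI
    obtain ⟨-, hI2⟩ := Finset.mem_filter.mp hI
    have h1 : (fdown hmn (I.erase (Fin.last ((γ ++ [b, a]).sum)))).card
        = (I.erase (Fin.last ((γ ++ [b, a]).sum))).card := by
      conv_rhs => rw [← fup_fdown hmn _ (eraseBound I)]
      rw [card_fup]
    have h2 : (I.erase (Fin.last ((γ ++ [b, a]).sum))).card + 1 = I.card := by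
      rw [Finset.card_erase_of_mem hI2]
      have : 0 < I.card := Finset.card_pos.mpr ⟨_, hI2⟩
      omega
    rw [h1, h2]

/-- The recursion for the rank generating function when the number of segments is even:
`r(q;α) = r(q;α₁,…,α_{s-2},α_{s-1}-1) + q·r(q;α₁,…,α_{s-1},α_s-1)`.
Here `α = γ ++ [b, a]`, so `b = α_{s-1}` and `a = α_s`. -/
theorem rpoly_rec_even (γ : List ℕ) (b a : ℕ) (hγ : ∀ x ∈ γ, 0 < x)
    (hb : 0 < b) (ha : 0 < a) (heven : Even (γ ++ [b, a]).length) :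
    rpoly (γ ++ [b, a]) =
      rpoly (normComp (γ ++ [b - 1])) +
        Polynomial.X * rpoly (normComp (γ ++ [b, a - 1])) := by
  have hn : γ.length % 2 = 0 := by
    obtain ⟨c, hc⟩ := heven
    simp [List.length_append] at hc
    omega
  rw [rpoly_normComp, rpoly_normComp, rpoly_eq_sum, rpoly_eq_sum, rpoly_eq_sum]
  rw [← Finset.sum_filter_add_sum_filter_not (idealSet (γ ++ [b, a]))
      (fun I => Fin.last ((γ ++ [b, a]).sum) ∉ I)]
  rw [sum_part1 γ b a hb ha hn]
  congr 1
  rw [Finset.mul_sum]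
  rw [show (Finset.filter (fun I => ¬ Fin.last ((γ ++ [b, a]).sum) ∉ I)
        (idealSet (γ ++ [b, a])))
      = Finset.filter (fun I => Fin.last ((γ ++ [b, a]).sum) ∈ I)
        (idealSet (γ ++ [b, a])) by
    refine Finset.filter_congr fun I _ => ?_
    simp]
  rw [sum_part2 γ b a hb ha hn]
  refine Finset.sum_congr rfl fun K _ => ?_
  rw [pow_succ, mul_comm]
end

section
/- If a finite ranked poset P admits a nested chain decomposition (a partition into saturated chains such that for any two chains C, D, the rank intervals satisfy [C] ⊆ [D] or [D] ⊆ [C]), then the rank sequence of P is unimodal. -/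
/-- `C` is a saturated chain in the poset `P`: it is nonempty, totally ordered,
and consecutive elements of `C` are covering pairs of `P`. -/
def IsSaturatedChain {P : Type*} [PartialOrder P] (C : Finset P) : Prop :=
  C.Nonempty ∧ (∀ x ∈ C, ∀ y ∈ C, x ≤ y ∨ y ≤ x) ∧
    ∀ x ∈ C, ∀ y ∈ C, x < y → (∀ z ∈ C, ¬(x < z ∧ z < y)) → x ⋖ y

/-- `x` and `y` are the bottom and top elements of the chain `C`. -/
def ChainEnds {P : Type*} [PartialOrder P] (C : Finset P) (x y : P) : Prop :=
  x ∈ C ∧ y ∈ C ∧ (∀ z ∈ C, x ≤ z) ∧ ∀ z ∈ C, z ≤ y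

/-- `𝒞` is a chain decomposition of `P`: a partition of `P` into saturated chains. -/
def IsChainDecomp {P : Type*} [PartialOrder P] (𝒞 : Finset (Finset P)) : Prop :=
  (∀ C ∈ 𝒞, IsSaturatedChain C) ∧
  (∀ C ∈ 𝒞, ∀ D ∈ 𝒞, C ≠ D → Disjoint C D) ∧
  ∀ x : P, ∃ C ∈ 𝒞, x ∈ C

/-- The sequence `a₀,…,a_n` is top interlacing:
`a₀ ≤ a_n ≤ a₁ ≤ a_{n-1} ≤ … ≤ a_{⌈n/2⌉}`. -/
def TopInterlacing (r : ℕ → ℕ) (n : ℕ) : Prop :=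
  (∀ i, 2 * i < n → r i ≤ r (n - i)) ∧ ∀ i, 2 * i + 1 < n → r (n - i) ≤ r (i + 1)

/-- The sequence `a₀,…,a_n` is bottom interlacing:
`a_n ≤ a₀ ≤ a_{n-1} ≤ a₁ ≤ … ≤ a_{⌊n/2⌋}`. -/
def BottomInterlacing (r : ℕ → ℕ) (n : ℕ) : Prop :=
  (∀ i, 2 * i < n → r (n - i) ≤ r i) ∧ ∀ i, 2 * i + 1 < n → r i ≤ r (n - 1 - i)

/-- A sequence of natural numbers (indexed by `ℕ`) is unimodal. -/
def SeqUnimodal (r : ℕ → ℕ) : Prop :=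
  ∃ m : ℕ, ∀ i j : ℕ, i ≤ j → (j ≤ m → r i ≤ r j) ∧ (m ≤ i → r j ≤ r i)

section Aux
variable {P : Type*} [PartialOrder P]

lemma chain_succ {C : Finset P} (hC : IsSaturatedChain C) {z w : P}
    (hz : z ∈ C) (hw : w ∈ C) (hzw : z < w) :
    ∃ u ∈ C, z ⋖ u ∧ u ≤ w := by
  classical
  obtain ⟨hne, hcomp, hsat⟩ := hC
  have hfne : (C.filter fun v => z < v ∧ v ≤ w).Nonempty := ⟨w, by simp [hw, hzw]⟩
  obtain ⟨u, hu, hmin⟩ : ∃ u ∈ C.filter (fun v => z < v ∧ v ≤ w), ∀ v ∈ C.filter (fun v => z < v ∧ v ≤ w), ¬ v < u := by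
    obtain ⟨u, hu, h⟩ := Finset.exists_minimal hfne
    exact ⟨u, hu, fun v hv hvu => lt_irrefl _ (hvu.trans_le (h hv hvu.le))⟩
  simp only [Finset.mem_filter] at hu
  refine ⟨u, hu.1, hsat z hz u hu.1 hu.2.1 ?_, hu.2.2⟩
  rintro v hv ⟨hzv, hvu⟩
  exact hmin v (Finset.mem_filter.2 ⟨hv, hzv, le_trans hvu.le hu.2.2⟩) hvu

lemma chain_strictMono {n : ℕ} (ρ : P → ℕ) (hcov : ∀ x y : P, x ⋖ y → ρ y = ρ x + 1)
    (hle : ∀ x, ρ x ≤ n) {C : Finset P} (hC : IsSaturatedChain C) :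
    ∀ z ∈ C, ∀ w ∈ C, z < w → ρ z < ρ w := by
  have key : ∀ k, ∀ z ∈ C, ∀ w ∈ C, z < w → n - ρ z ≤ k → ρ z < ρ w := by
    intro k
    induction k with
    | zero =>
      intro z hz w hw hzw h0
      obtain ⟨u, hu, hcv, _⟩ := chain_succ hC hz hw hzw
      have h1 := hcov z u hcv
      have h2 := hle u
      omega
    | succ k ih =>
      intro z hz w hw hzw hk
      obtain ⟨u, hu, hcv, huw⟩ := chain_succ hC hz hw hzw
      have h1 := hcov z u hcv
      rcases eq_or_lt_of_le huw with rfl | hlt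
      · omega
      · have := ih u hu w hw hlt (by have := hle u; omega)
        omega
  exact fun z hz w hw hzw => key (n - ρ z) z hz w hw hzw le_rfl

lemma chain_mono {n : ℕ} (ρ : P → ℕ) (hcov : ∀ x y : P, x ⋖ y → ρ y = ρ x + 1)
    (hle : ∀ x, ρ x ≤ n) {C : Finset P} (hC : IsSaturatedChain C) :
    ∀ z ∈ C, ∀ w ∈ C, z ≤ w → ρ z ≤ ρ w := by
  intro z hz w hw hzw
  rcases eq_or_lt_of_le hzw with rfl | h
  · exact le_rfl
  · exact (chain_strictMono ρ hcov hle hC z hz w hw h).le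

lemma chain_ends_exist {C : Finset P} (hC : IsSaturatedChain C) :
    ∃ x y, ChainEnds C x y := by
  obtain ⟨hne, hcomp, _⟩ := hC
  obtain ⟨x, hx, hxmin⟩ : ∃ x ∈ C, ∀ z ∈ C, ¬ z < x := by
    obtain ⟨x, hx, h⟩ := Finset.exists_minimal hne
    exact ⟨x, hx, fun v hv hvu => lt_irrefl _ (hvu.trans_le (h hv hvu.le))⟩
  obtain ⟨y, hy, hymax⟩ : ∃ y ∈ C, ∀ z ∈ C, ¬ y < z := by
    obtain ⟨y, hy, h⟩ := Finset.exists_maximal hne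
    exact ⟨y, hy, fun v hv hvu => lt_irrefl _ (hvu.trans_le (h hv hvu.le))⟩
  refine ⟨x, y, hx, hy, ?_, ?_⟩
  · intro z hz
    rcases hcomp x hx z hz with h | h
    · exact h
    · rcases eq_or_lt_of_le h with rfl | h'
      · exact le_rfl
      · exact absurd h' (hxmin z hz)
  · intro z hz
    rcases hcomp z hz y hy with h | h
    · exact h
    · rcases eq_or_lt_of_le h with rfl | h'
      · exact le_rfl
      · exact absurd h' (hymax z hz)

lemma chain_surj {n : ℕ} (ρ : P → ℕ) (hcov : ∀ x y : P, x ⋖ y → ρ y = ρ x + 1)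
    (hle : ∀ x, ρ x ≤ n) {C : Finset P} (hC : IsSaturatedChain C) {x y : P}
    (hends : ChainEnds C x y) :
    ∀ k, ρ x ≤ k → k ≤ ρ y → ∃ z ∈ C, ρ z = k := by
  intro k hk
  induction k, hk using Nat.le_induction with
  | base => intro _; exact ⟨x, hends.1, rfl⟩
  | succ k hk ih =>
    intro hky
    obtain ⟨z, hz, hρz⟩ := ih (by omega)
    have hzy : z < y := by
      rcases eq_or_lt_of_le (hends.2.2.2 z hz) with rfl | h
      · omega
      · exact h
    obtain ⟨u, hu, hcv, _⟩ := chain_succ hC hz hends.2.1 hzy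
    exact ⟨u, hu, by rw [hcov z u hcv, hρz]⟩

lemma chain_uniq {n : ℕ} (ρ : P → ℕ) (hcov : ∀ x y : P, x ⋖ y → ρ y = ρ x + 1)
    (hle : ∀ x, ρ x ≤ n) {C : Finset P} (hC : IsSaturatedChain C) {z w : P}
    (hz : z ∈ C) (hw : w ∈ C) (h : ρ z = ρ w) : z = w := by
  rcases hC.2.1 z hz w hw with hle' | hle'
  · rcases eq_or_lt_of_le hle' with rfl | h'
    · rfl
    · exact absurd h (chain_strictMono ρ hcov hle hC z hz w hw h').ne
  · rcases eq_or_lt_of_le hle' with rfl | h'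
    · rfl
    · exact absurd h.symm (chain_strictMono ρ hcov hle hC w hw z hz h').ne

end Aux

/-- If a finite ranked poset `P` (with rank function `ρ`, rank `n`) admits a
nested chain decomposition (the rank intervals of any two chains are
comparable under inclusion), then its rank sequence is unimodal. -/
theorem rank_unimodal_of_NCD {P : Type*} [Finite P] [PartialOrder P]
    (ρ : P → ℕ) (hcov : ∀ x y : P, x ⋖ y → ρ y = ρ x + 1)
    (hmin : ∀ x : P, IsMin x → ρ x = 0)
    (n : ℕ) (hle : ∀ x, ρ x ≤ n) (hex : ∃ x, ρ x = n)
    (𝒞 : Finset (Finset P)) (hCD : IsChainDecomp 𝒞)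
    (hnest : ∀ C ∈ 𝒞, ∀ D ∈ 𝒞, ∀ x y x' y' : P,
      ChainEnds C x y → ChainEnds D x' y' →
        Set.Icc (ρ x) (ρ y) ⊆ Set.Icc (ρ x') (ρ y') ∨
        Set.Icc (ρ x') (ρ y') ⊆ Set.Icc (ρ x) (ρ y)) :
    SeqUnimodal (fun k => Nat.card {z : P // ρ z = k}) := by
  classical
  haveI := Fintype.ofFinite P
  obtain ⟨hsatAll, hdisj, hcover⟩ := hCD
  -- rank count equals number of chains whose interval contains k
  have hr : ∀ k, Nat.card {z : P // ρ z = k}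
      = (𝒞.filter fun C => ∃ z ∈ C, ρ z = k).card := by
    intro k
    have h1 : Nat.card {z : P // ρ z = k}
        = (Finset.univ.filter fun z : P => ρ z = k).card := by
      rw [Nat.card_eq_fintype_card, Fintype.card_subtype]
    have h2 : (Finset.univ.filter fun z : P => ρ z = k)
        = 𝒞.biUnion fun C => C.filter fun z => ρ z = k := by
      ext z
      simp only [Finset.mem_filter, Finset.mem_univ, true_and, Finset.mem_biUnion]
      constructor
      · intro hz
        obtain ⟨C, hC, hzC⟩ := hcover z
        exact ⟨C, hC, hzC, hz⟩
      · rintro ⟨C, hC, hzC, hz⟩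
        exact hz
    have h3 : ((𝒞.biUnion fun C => C.filter fun z => ρ z = k)).card
        = ∑ C ∈ 𝒞, (C.filter fun z => ρ z = k).card := by
      apply Finset.card_biUnion
      intro C hC D hD hne
      exact Finset.disjoint_filter_filter (hdisj C hC D hD hne)
    have h4 : ∀ C ∈ 𝒞, (C.filter fun z => ρ z = k).card
        = if (∃ z ∈ C, ρ z = k) then 1 else 0 := by
      intro C hC
      by_cases hex' : ∃ z ∈ C, ρ z = k
      · obtain ⟨z, hz, hρz⟩ := hex'
        rw [if_pos ⟨z, hz, hρz⟩]
        have : (C.filter fun w => ρ w = k) = {z} := by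
          ext w
          simp only [Finset.mem_filter, Finset.mem_singleton]
          constructor
          · rintro ⟨hw, hρw⟩
            exact chain_uniq ρ hcov hle (hsatAll C hC) hw hz (hρw.trans hρz.symm)
          · rintro rfl; exact ⟨hz, hρz⟩
        rw [this, Finset.card_singleton]
      · rw [if_neg hex']
        rw [Finset.card_eq_zero, Finset.filter_eq_empty_iff]
        intro z hz hρz
        exact hex' ⟨z, hz, hρz⟩
    rw [h1, h2, h3, Finset.sum_congr rfl h4, ← Finset.card_filter]
  -- choose m
  set A : Finset ℕ :=
    (Finset.univ.filter fun x : P => ∃ C ∈ 𝒞, ∃ y, ChainEnds C x y).image ρ with hA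
  have hAne : A.Nonempty := by
    obtain ⟨x0, _⟩ := hex
    obtain ⟨C, hC, hx0⟩ := hcover x0
    obtain ⟨x, y, hends⟩ := chain_ends_exist (hsatAll C hC)
    exact ⟨ρ x, Finset.mem_image.2 ⟨x, Finset.mem_filter.2
      ⟨Finset.mem_univ _, C, hC, y, hends⟩, rfl⟩⟩
  set m := A.max' hAne with hm
  -- m is in every chain's rank interval
  have hkey : ∀ C ∈ 𝒞, ∀ x y : P, ChainEnds C x y → ρ x ≤ m ∧ m ≤ ρ y := by
    intro C hC x y hends
    have hxm : ρ x ≤ m :=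
      Finset.le_max' A _ (Finset.mem_image.2 ⟨x, Finset.mem_filter.2
        ⟨Finset.mem_univ _, C, hC, y, hends⟩, rfl⟩)
    refine ⟨hxm, ?_⟩
    have hmem := Finset.max'_mem A hAne
    rw [← hm] at hmem
    obtain ⟨x0, hx0, hρx0⟩ := Finset.mem_image.1 hmem
    obtain ⟨C0, hC0, y0, hends0⟩ := (Finset.mem_filter.1 hx0).2
    have hxy0 : ρ x0 ≤ ρ y0 :=
      chain_mono ρ hcov hle (hsatAll C0 hC0) x0 hends0.1 y0 hends0.2.1
        (hends0.2.2.2 x0 hends0.1)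
    have hxy : ρ x ≤ ρ y :=
      chain_mono ρ hcov hle (hsatAll C hC) x hends.1 y hends.2.1
        (hends.2.2.2 x hends.1)
    rcases hnest C0 hC0 C hC x0 y0 x y hends0 hends with hsub | hsub
    · have := hsub (Set.mem_Icc.2 ⟨le_rfl, hxy0⟩)
      rw [Set.mem_Icc] at this
      omega
    · have := hsub (Set.mem_Icc.2 ⟨le_rfl, hxy⟩)
      rw [Set.mem_Icc] at this
      omega
  refine ⟨m, fun i j hij => ⟨fun hjm => ?_, fun hmi => ?_⟩⟩
  · simp only [hr]
    apply Finset.card_le_card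
    intro C hCm
    rw [Finset.mem_filter] at hCm ⊢
    obtain ⟨hC, z, hz, hρz⟩ := hCm
    refine ⟨hC, ?_⟩
    obtain ⟨x, y, hends⟩ := chain_ends_exist (hsatAll C hC)
    obtain ⟨hxm, hmy⟩ := hkey C hC x y hends
    have hxz : ρ x ≤ ρ z :=
      chain_mono ρ hcov hle (hsatAll C hC) x hends.1 z hz (hends.2.2.1 z hz)
    exact chain_surj ρ hcov hle (hsatAll C hC) hends j (by omega) (by omega)
  · simp only [hr]
    apply Finset.card_le_card
    intro C hCm
    rw [Finset.mem_filter] at hCm ⊢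
    obtain ⟨hC, z, hz, hρz⟩ := hCm
    refine ⟨hC, ?_⟩
    obtain ⟨x, y, hends⟩ := chain_ends_exist (hsatAll C hC)
    obtain ⟨hxm, hmy⟩ := hkey C hC x y hends
    have hzy : ρ z ≤ ρ y :=
      chain_mono ρ hcov hle (hsatAll C hC) z hz y hends.2.1 (hends.2.2.2 z hz)
    exact chain_surj ρ hcov hle (hsatAll C hC) hends i (by omega) (by omega)
end
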